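/- The series Σ_{ℓ powerful} log(ℓ + 1)/ℓ, summed over all powerful natural numbers ℓ, converges. -/

import Mathlib

open Finset
open scoped Classical

/-- Number of distinct exponents in the prime factorization of `n`. -/
noncomputable def fexp (n : ℕ) : ℕ :=
  (n.primeFactors.image fun p => n.factorization p).card

/-- `n` is powerful if every prime dividing `n` divides it at least twice. -/
def Powerful (n : ℕ) : Prop :=
  0 < n ∧ ∀ p : ℕ, p.Prime → p ∣ n → p ^ 2 ∣ n

/-- Dedekind `ψ` function, as a real number. -/
noncomputable def dedekindPsi (n : ℕ) : ℝ :=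
  (n : ℝ) * ∏ p ∈ n.primeFactors, (1 + 1 / (p : ℝ))

noncomputable def rho : ℕ → ℕ → ℝ
  | 0, _ => 0
  | 1, n => if n = 1 then 1 else 0
  | (k + 2), n =>
      if n = 1 ∨ ¬ Squarefree n then 0
      else (1 / ((n : ℝ) - 1)) * ∑ d ∈ n.divisors.filter (· < n), rho (k + 1) d

/-- `g(n) = ω(n) - f(n)`. -/
noncomputable def gexp (n : ℕ) : ℕ := n.primeFactors.card - fexp n

/-- `n` is special if all exponents in its prime factorization are distinct. -/
noncomputable def Special (n : ℕ) : Prop := fexp n = n.primeFactors.card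

/-- Every powerful number can be written as `a ^ 2 * b ^ 3`. -/
lemma powerful_rep (n : ℕ) (hn : Powerful n) :
    ∃ z : ℕ × ℕ, 0 < z.1 ∧ 0 < z.2 ∧ n = z.1 ^ 2 * z.2 ^ 3 := by
  induction n using Nat.strong_induction_on with
  | _ n ih =>
    rcases eq_or_lt_of_le (show 1 ≤ n from hn.1) with h1 | h1
    · exact ⟨(1, 1), one_pos, one_pos, by simp [← h1]⟩
    · have hn2 : 2 ≤ n := h1
      set p := n.minFac with hpdef
      have hp : p.Prime := Nat.minFac_prime (by omega)
      have hp0 : 0 < p := hp.pos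
      set e := n.factorization p with hedef
      set m := n / p ^ e with hmdef
      have hnm : p ^ e * m = n := Nat.ordProj_mul_ordCompl_eq_self n p
      have hpm : ¬ p ∣ m := Nat.not_dvd_ordCompl hp (by omega)
      have hpn : p ∣ n := Nat.minFac_dvd n
      have hp2 : p ^ 2 ∣ n := hn.2 p hp hpn
      have he2 : 2 ≤ e := by
        rw [hedef]
        exact (Nat.Prime.pow_dvd_iff_le_factorization hp (by omega)).mp hp2
      have hpe : 2 ≤ p ^ e := le_trans hp.two_le (Nat.le_self_pow (by omega) p)
      have hm0 : 0 < m := by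
        rcases Nat.eq_zero_or_pos m with h | h
        · rw [h, mul_zero] at hnm; omega
        · exact h
      have hmlt : m < n := by
        calc m < p ^ e * m := by nlinarith
        _ = n := hnm
      have hmp : Powerful m := by
        refine ⟨hm0, fun q hq hqm => ?_⟩
        have hqn : q ∣ n := hqm.trans ⟨p ^ e, by rw [← hnm]; ring⟩
        have h2 : q ^ 2 ∣ n := hn.2 q hq hqn
        have hqp : q ≠ p := fun h => hpm (h ▸ hqm)
        have hcop : (q ^ 2).Coprime (p ^ e) :=
          ((Nat.coprime_primes hq hp).mpr hqp).pow _ _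
        exact hcop.dvd_of_dvd_mul_left (by rw [hnm]; exact h2)
      obtain ⟨⟨a, b⟩, ha, hb, hab⟩ := ih m hmlt hmp
      simp only at ha hb hab
      rcases Nat.even_or_odd e with he | he
      · obtain ⟨k, hk⟩ := he
        exact ⟨(p ^ k * a, b), by positivity, hb, by
          simp only; rw [← hnm, hab, hk]; ring⟩
      · obtain ⟨k, hk⟩ := he
        have hk1 : 1 ≤ k := by omega
        refine ⟨(p ^ (k - 1) * a, p * b), by positivity, by positivity, ?_⟩
        simp only
        rw [← hnm, hab]
        have : e = 2 * (k - 1) + 3 := by omega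
        rw [this]; ring

/-- A chosen representation `ℓ = a ^ 2 * b ^ 3` for powerful `ℓ`. -/
noncomputable def powRep (ℓ : ℕ) : ℕ × ℕ :=
  if h : Powerful ℓ then (powerful_rep ℓ h).choose else (ℓ, 0)

lemma powRep_spec {ℓ : ℕ} (h : Powerful ℓ) :
    0 < (powRep ℓ).1 ∧ 0 < (powRep ℓ).2 ∧ ℓ = (powRep ℓ).1 ^ 2 * (powRep ℓ).2 ^ 3 := by
  rw [powRep, dif_pos h]; exact (powerful_rep ℓ h).choose_spec

lemma powRep_not {ℓ : ℕ} (h : ¬ Powerful ℓ) : powRep ℓ = (ℓ, 0) := by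
  rw [powRep, dif_neg h]

lemma powRep_inj : Function.Injective powRep := by
  intro x y hxy
  by_cases hx : Powerful x <;> by_cases hy : Powerful y
  · obtain ⟨_, _, hx3⟩ := powRep_spec hx
    obtain ⟨_, _, hy3⟩ := powRep_spec hy
    rw [hx3, hy3, hxy]
  · exfalso
    have h2 := (powRep_spec hx).2.1
    rw [hxy, powRep_not hy] at h2
    simp at h2
  · exfalso
    have h2 := (powRep_spec hy).2.1
    rw [← hxy, powRep_not hx] at h2
    simp at h2
  · rw [powRep_not hx, powRep_not hy] at hxy
    exact ((Prod.mk.injEq ..).mp hxy).1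

/-- The dominating function on pairs. -/
noncomputable def Gbd : ℕ × ℕ → ℝ :=
  fun z => (8 / (z.1 : ℝ) ^ ((3 : ℝ) / 2)) * (1 / (z.2 : ℝ) ^ ((9 : ℝ) / 4))

set_option maxHeartbeats 1000000 in
lemma Gbd_summable : Summable Gbd := by
  have h1 : Summable (fun a : ℕ => 8 / (a : ℝ) ^ ((3 : ℝ) / 2)) := by
    have := ((Real.summable_one_div_nat_rpow (p := 3 / 2)).mpr (by norm_num)).mul_left (8 : ℝ)
    refine this.congr fun a => ?_
    rw [mul_one_div]
  have h2 : Summable (fun b : ℕ => 1 / (b : ℝ) ^ ((9 : ℝ) / 4)) :=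
    (Real.summable_one_div_nat_rpow (p := 9 / 4)).mpr (by norm_num)
  exact h1.mul_of_nonneg h2 (fun a => by positivity) (fun b => by positivity)

theorem stmt_16 :
    Summable (fun ℓ : ℕ => if Powerful ℓ then Real.log ((ℓ : ℝ) + 1) / (ℓ : ℝ) else 0) := by
  refine Summable.of_nonneg_of_le ?_ ?_
    (Gbd_summable.comp_injective powRep_inj)
  · intro ℓ
    by_cases h : Powerful ℓ
    · rw [if_pos h]
      have h0 : (0 : ℝ) ≤ (ℓ : ℝ) := Nat.cast_nonneg _
      exact div_nonneg (Real.log_nonneg (by linarith)) h0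
    · rw [if_neg h]
  · intro ℓ
    by_cases h : Powerful ℓ
    · rw [if_pos h]
      obtain ⟨ha, hb, hab⟩ := powRep_spec h
      set a := (powRep ℓ).1
      set b := (powRep ℓ).2
      have hA : (0 : ℝ) < (a : ℝ) := by exact_mod_cast ha
      have hB : (0 : ℝ) < (b : ℝ) := by exact_mod_cast hb
      have hl1 : 1 ≤ ℓ := h.1
      have hl1' : (1 : ℝ) ≤ (ℓ : ℝ) := by exact_mod_cast hl1
      have hlpos : (0 : ℝ) < (ℓ : ℝ) := by linarith
      -- log (ℓ + 1) ≤ 8 * ℓ ^ (1/4)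
      have hlog : Real.log ((ℓ : ℝ) + 1) ≤ 8 * (ℓ : ℝ) ^ ((1 : ℝ) / 4) := by
        have h1 := Real.log_le_rpow_div (x := (ℓ : ℝ) + 1) (by positivity)
          (ε := 1 / 4) (by norm_num)
        have h2 : ((ℓ : ℝ) + 1) ^ ((1 : ℝ) / 4) ≤ ((2 : ℝ) * (ℓ : ℝ)) ^ ((1 : ℝ) / 4) :=
          Real.rpow_le_rpow (by positivity) (by linarith) (by norm_num)
        have h3 : ((2 : ℝ) * (ℓ : ℝ)) ^ ((1 : ℝ) / 4)
            = (2 : ℝ) ^ ((1 : ℝ) / 4) * (ℓ : ℝ) ^ ((1 : ℝ) / 4) :=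
          Real.mul_rpow (by norm_num) (by positivity)
        have h4 : (2 : ℝ) ^ ((1 : ℝ) / 4) ≤ 2 := by
          calc (2 : ℝ) ^ ((1 : ℝ) / 4) ≤ (2 : ℝ) ^ (1 : ℝ) :=
                Real.rpow_le_rpow_of_exponent_le (by norm_num) (by norm_num)
            _ = 2 := Real.rpow_one 2
        have h5 : (0 : ℝ) ≤ (ℓ : ℝ) ^ ((1 : ℝ) / 4) := Real.rpow_nonneg hlpos.le _
        rw [h3] at h2
        nlinarith
      -- hence log(ℓ+1)/ℓ ≤ 8 / ℓ ^ (3/4)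
      have hdiv : Real.log ((ℓ : ℝ) + 1) / (ℓ : ℝ) ≤ 8 / (ℓ : ℝ) ^ ((3 : ℝ) / 4) := by
        rw [div_le_div_iff₀ hlpos (by positivity)]
        calc Real.log ((ℓ : ℝ) + 1) * (ℓ : ℝ) ^ ((3 : ℝ) / 4)
            ≤ (8 * (ℓ : ℝ) ^ ((1 : ℝ) / 4)) * (ℓ : ℝ) ^ ((3 : ℝ) / 4) :=
              mul_le_mul_of_nonneg_right hlog (Real.rpow_nonneg hlpos.le _)
          _ = 8 * ((ℓ : ℝ) ^ ((1 : ℝ) / 4) * (ℓ : ℝ) ^ ((3 : ℝ) / 4)) := by ring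
          _ = 8 * (ℓ : ℝ) := by
              rw [← Real.rpow_add hlpos]
              norm_num
      -- and ℓ ^ (3/4) = a ^ (3/2) * b ^ (9/4)
      have hcast : (ℓ : ℝ) = (a : ℝ) ^ (2 : ℕ) * (b : ℝ) ^ (3 : ℕ) := by
        rw [hab]; push_cast; ring
      have hsplit : (ℓ : ℝ) ^ ((3 : ℝ) / 4)
          = (a : ℝ) ^ ((3 : ℝ) / 2) * (b : ℝ) ^ ((9 : ℝ) / 4) := by
        rw [hcast, Real.mul_rpow (by positivity) (by positivity),
          ← Real.rpow_natCast (a : ℝ) 2, ← Real.rpow_natCast (b : ℝ) 3,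
          ← Real.rpow_mul hA.le, ← Real.rpow_mul hB.le]
        norm_num
      have hG : (Gbd ∘ powRep) ℓ = 8 / (ℓ : ℝ) ^ ((3 : ℝ) / 4) := by
        simp only [Function.comp_apply, Gbd]
        rw [hsplit, div_mul_div_comm, mul_one]
      rw [hG]
      exact hdiv
    · rw [if_neg h]
      rw [Function.comp_apply, powRep_not h, Gbd]
      simp [Real.zero_rpow]
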